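/- arXiv:1705.10299 — 4 statements merged into one kernel-verified Lean document; each statement's English description precedes it below -/
import Mathlib

section
/- For every 0 < p ≤ q and every vector x ∈ ℂ^N, the best s-term approximation error of x in the ℓ^q norm satisfies σ_s(x)_q ≤ s^(1/q - 1/p) · ‖x‖_p. -/
open Finset

noncomputable def lpNorm {n : ℕ} (p : ℝ) (x : Fin n → ℂ) : ℝ :=
  (∑ i, ‖x i‖ ^ p) ^ (1 / p)

/-- Best `s`-term approximation error of `x` in the `ℓ^p` (quasi-)norm. -/
noncomputable def bestApprox {n : ℕ} (s : ℕ) (p : ℝ) (x : Fin n → ℂ) : ℝ :=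
  sInf ((fun w => lpNorm p (x - w)) ''
    {w : Fin n → ℂ | ∃ S : Finset (Fin n), S.card ≤ s ∧ ∀ i ∉ S, w i = 0})

/-- There is a set of `s` indices carrying the `s` largest values of `‖x ·‖`. -/
lemma exists_top_set {N : ℕ} (s : ℕ) (hsN : s ≤ N) (x : Fin N → ℂ) :
    ∃ T : Finset (Fin N), T.card = s ∧ ∀ i ∉ T, ∀ j ∈ T, ‖x i‖ ≤ ‖x j‖ := by
  obtain ⟨F, hFsub, hFcard⟩ :=
    Finset.exists_subset_card_eq (s := (univ : Finset (Fin N))) (n := s) (by simpa using hsN)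
  have hne : ((univ : Finset (Fin N)).powersetCard s).Nonempty :=
    ⟨F, Finset.mem_powersetCard.2 ⟨hFsub, hFcard⟩⟩
  obtain ⟨T, hTmem, hTmax⟩ :=
    Finset.exists_max_image _ (fun T => ∑ j ∈ T, ‖x j‖) hne
  refine ⟨T, (Finset.mem_powersetCard.1 hTmem).2, ?_⟩
  intro i hi j hj
  by_contra h
  push_neg at h
  have hiT' : i ∉ T.erase j := fun h' => hi (Finset.mem_of_mem_erase h')
  have hcard : (insert i (T.erase j)).card = T.card := by
    rw [Finset.card_insert_of_notMem hiT', Finset.card_erase_of_mem hj]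
    have : 0 < T.card := Finset.card_pos.2 ⟨j, hj⟩
    omega
  have hmem' : insert i (T.erase j) ∈ (univ : Finset (Fin N)).powersetCard s :=
    Finset.mem_powersetCard.2 ⟨Finset.subset_univ _,
      hcard.trans (Finset.mem_powersetCard.1 hTmem).2⟩
  have hsum : ∑ k ∈ T, ‖x k‖ < ∑ k ∈ insert i (T.erase j), ‖x k‖ := by
    rw [Finset.sum_insert hiT', ← Finset.add_sum_erase T _ hj]
    exact add_lt_add_left h _
  exact absurd (hTmax _ hmem') (not_le.2 hsum)

/-- For every `0 < p ≤ q`, `σ_s(x)_q ≤ s^(1/q - 1/p) ‖x‖_p`. -/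
theorem stmt0 {N : ℕ} (s : ℕ) (hs1 : 1 ≤ s) (hsN : s ≤ N)
    (p q : ℝ) (hp : 0 < p) (hpq : p ≤ q) (x : Fin N → ℂ) :
    bestApprox s q x ≤ (s : ℝ) ^ (1 / q - 1 / p) * lpNorm p x := by
  have hq : 0 < q := hp.trans_le hpq
  have hs : (0 : ℝ) < s := by exact_mod_cast hs1
  obtain ⟨T, hTcard, hTtop⟩ := exists_top_set s hsN x
  set A : ℝ := ∑ i, ‖x i‖ ^ p with hAdef
  have hA0 : 0 ≤ A := Finset.sum_nonneg fun i _ => Real.rpow_nonneg (norm_nonneg _) _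
  set w : Fin N → ℂ := fun i => if i ∈ T then x i else 0 with hw
  -- step 1 : bestApprox ≤ lpNorm q (x - w)
  have hbdd : BddBelow ((fun w => lpNorm q (x - w)) ''
      {w : Fin N → ℂ | ∃ S : Finset (Fin N), S.card ≤ s ∧ ∀ i ∉ S, w i = 0}) := by
    refine ⟨0, ?_⟩
    rintro y ⟨v, -, rfl⟩
    exact Real.rpow_nonneg
      (Finset.sum_nonneg fun i _ => Real.rpow_nonneg (norm_nonneg _) _) _
  have hmem : lpNorm q (x - w) ∈ ((fun w => lpNorm q (x - w)) ''
      {w : Fin N → ℂ | ∃ S : Finset (Fin N), S.card ≤ s ∧ ∀ i ∉ S, w i = 0}) :=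
    ⟨w, ⟨T, hTcard.le, fun i hi => if_neg hi⟩, rfl⟩
  refine le_trans (csInf_le hbdd hmem) ?_
  -- step 2 : lpNorm q (x - w) = (∑ i ∈ Tᶜ, ‖x i‖ ^ q) ^ (1/q)
  have hsum_eq : ∑ i, ‖(x - w) i‖ ^ q = ∑ i ∈ Tᶜ, ‖x i‖ ^ q := by
    have h1 : ∀ i, ‖(x - w) i‖ ^ q = if i ∈ T then 0 else ‖x i‖ ^ q := by
      intro i
      by_cases h : i ∈ T <;> simp [hw, h, Real.zero_rpow hq.ne']
    rw [Finset.sum_congr rfl fun i _ => h1 i, Finset.sum_ite, Finset.sum_const,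
      smul_zero, zero_add]
    congr 1
    ext i
    simp
  -- step 3 : tail bound  ‖x i‖ ^ p ≤ A / s  for i ∉ T
  have hkey : ∀ i ∉ T, ‖x i‖ ^ p ≤ A / s := by
    intro i hi
    rw [le_div_iff₀ hs, mul_comm]
    calc (s : ℝ) * ‖x i‖ ^ p = ∑ _j ∈ T, ‖x i‖ ^ p := by
          rw [Finset.sum_const, hTcard, nsmul_eq_mul]
      _ ≤ ∑ j ∈ T, ‖x j‖ ^ p :=
          Finset.sum_le_sum fun j hj =>
            Real.rpow_le_rpow (norm_nonneg _) (hTtop i hi j hj) hp.le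
      _ ≤ A := Finset.sum_le_sum_of_subset_of_nonneg (Finset.subset_univ T)
          fun i _ _ => Real.rpow_nonneg (norm_nonneg _) _
  -- step 4 : ∑_{Tᶜ} ‖x i‖^q ≤ (A/s)^((q-p)/p) * A
  have hsum_le : ∑ i ∈ Tᶜ, ‖x i‖ ^ q ≤ (A / s) ^ ((q - p) / p) * A := by
    have h1 : ∀ i ∈ Tᶜ, ‖x i‖ ^ q ≤ (A / s) ^ ((q - p) / p) * ‖x i‖ ^ p := by
      intro i hi
      have hi' : i ∉ T := Finset.mem_compl.1 hi
      have e1 : ‖x i‖ ^ q = ‖x i‖ ^ (q - p) * ‖x i‖ ^ p := by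
        rw [← Real.rpow_add' (norm_nonneg _) (by rw [sub_add_cancel]; exact hq.ne')]
        ring_nf
      rw [e1]
      refine mul_le_mul_of_nonneg_right ?_ (Real.rpow_nonneg (norm_nonneg _) _)
      have e2 : ‖x i‖ ^ (q - p) = (‖x i‖ ^ p) ^ ((q - p) / p) := by
        rw [← Real.rpow_mul (norm_nonneg _)]
        congr 1
        field_simp
      rw [e2]
      exact Real.rpow_le_rpow (Real.rpow_nonneg (norm_nonneg _) _) (hkey i hi')
        (div_nonneg (sub_nonneg.2 hpq) hp.le)
    calc ∑ i ∈ Tᶜ, ‖x i‖ ^ q ≤ ∑ i ∈ Tᶜ, (A / s) ^ ((q - p) / p) * ‖x i‖ ^ p :=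
          Finset.sum_le_sum h1
      _ = (A / s) ^ ((q - p) / p) * ∑ i ∈ Tᶜ, ‖x i‖ ^ p := by
          rw [Finset.mul_sum]
      _ ≤ (A / s) ^ ((q - p) / p) * A := by
          refine mul_le_mul_of_nonneg_left ?_ (Real.rpow_nonneg (by positivity) _)
          exact Finset.sum_le_sum_of_subset_of_nonneg (Finset.subset_univ _)
            fun i _ _ => Real.rpow_nonneg (norm_nonneg _) _
  -- step 5 : put it together
  have step : lpNorm q (x - w) ≤ ((A / s) ^ ((q - p) / p) * A) ^ (1 / q) := by
    unfold lpNorm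
    rw [hsum_eq]
    exact Real.rpow_le_rpow
      (Finset.sum_nonneg fun i _ => Real.rpow_nonneg (norm_nonneg _) _)
      hsum_le (by positivity)
  refine step.trans ?_
  -- step 6 : final algebra
  have hlp : lpNorm p x = A ^ (1 / p) := rfl
  rw [hlp]
  rcases eq_or_lt_of_le hA0 with hA | hA
  · rw [← hA]
    have h0 : ((0 : ℝ) / s) ^ ((q - p) / p) * 0 = 0 := by ring
    rw [h0, Real.zero_rpow (by positivity), Real.zero_rpow (by positivity)]
    simp
  · have key : ((A / s) ^ ((q - p) / p) * A) ^ (1 / q)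
        = (s : ℝ) ^ (1 / q - 1 / p) * A ^ (1 / p) := by
      have hp' : p ≠ 0 := hp.ne'
      have hq' : q ≠ 0 := hq.ne'
      have h1 : (A / (s : ℝ)) ^ ((q - p) / p) * A
          = A ^ ((q - p) / p + 1) * (s : ℝ) ^ (-((q - p) / p)) := by
        rw [Real.div_rpow hA.le hs.le, Real.rpow_add hA, Real.rpow_one,
          Real.rpow_neg hs.le]
        ring
      rw [h1, Real.mul_rpow (by positivity) (by positivity),
        ← Real.rpow_mul hA.le, ← Real.rpow_mul hs.le,
        show ((q - p) / p + 1) * (1 / q) = 1 / p by field_simp; ring,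
        show (-((q - p) / p)) * (1 / q) = 1 / q - 1 / p by field_simp; ring_nf,
        mul_comm]
    rw [key]
end

section
/- Let A ∈ ℂ^{m×N} and q ≥ 1, and suppose A satisfies the ℓ^q-robust null space property of order s with constants 0 < ρ < 1 and τ > 0 relative to the rescaled norm s^(1/q−1/2)‖·‖ on ℂ^m. Then the simultaneous quotient satisfies Q_s(A)_{q,1} ≤ (ρ + 2) Q_s(A)_1 + τ, where the quotients are relative to ‖·‖. -/
open scoped ENNReal
open scoped NNReal

/-- Restriction of `z` to the coordinates in `S` (zero elsewhere). -/
def restrictTo {n : ℕ} (S : Finset (Fin n)) (z : Fin n → ℂ) : Fin n → ℂ :=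
  fun i => if i ∈ S then z i else 0

/-- `A` satisfies the `ℓ^q`-robust null space property of order `s` with constants
`ρ, τ` relative to the norm `nu` on `ℂ^m`. -/
def RNSP {m N : ℕ} (A : Matrix (Fin m) (Fin N) ℂ) (nu : (Fin m → ℂ) → ℝ)
    (q : ℝ) (s : ℕ) (ρ τ : ℝ) : Prop :=
  ∀ S : Finset (Fin N), S.card ≤ s → ∀ z : Fin N → ℂ,
    lpNorm q (restrictTo S z) ≤
      (s : ℝ) ^ (1 / q - 1) * ρ * lpNorm 1 (restrictTo Sᶜ z) + τ * nu (A.mulVec z)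

/-- `ℓ^1`-quotient of order `s` (threshold 0) of `A`, relative to `nn`. -/
noncomputable def quotL1 {m N : ℕ} (A : Matrix (Fin m) (Fin N) ℂ)
    (nn : (Fin m → ℂ) → ℝ) (s : ℕ) : ℝ≥0∞ :=
  ⨆ e ∈ {e : Fin m → ℂ | e ≠ 0},
    ⨅ z ∈ {z : Fin N → ℂ | A.mulVec z = e},
      ENNReal.ofReal (lpNorm 1 z / ((s : ℝ) ^ ((1 : ℝ) / 2) * nn e))

/-- Simultaneous `(ℓ^q, ℓ^1)`-quotient of order `s` of `A`, relative to `nn`. -/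
noncomputable def quotSimul {m N : ℕ} (A : Matrix (Fin m) (Fin N) ℂ)
    (nn : (Fin m → ℂ) → ℝ) (q : ℝ) (s : ℕ) : ℝ≥0∞ :=
  ⨆ e ∈ {e : Fin m → ℂ | e ≠ 0},
    ⨅ z ∈ {z : Fin N → ℂ | A.mulVec z = e},
      ENNReal.ofReal
        (((s : ℝ) ^ ((1 : ℝ) / 2 - 1 / q) * lpNorm q z
            + (s : ℝ) ^ (-(1 : ℝ) / 2) * lpNorm 1 z) / nn e)

section AUX

lemma lpNorm_nonneg {n : ℕ} (p : ℝ) (x : Fin n → ℂ) : 0 ≤ lpNorm p x := by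
  unfold lpNorm; positivity

lemma lpNorm_one_eq {n : ℕ} (x : Fin n → ℂ) : lpNorm 1 x = ∑ i, ‖x i‖ := by
  simp [lpNorm]

lemma my_rpow_add_le {a b r : ℝ} (ha : 0 ≤ a) (hb : 0 ≤ b) (hr0 : 0 ≤ r) (hr1 : r ≤ 1) :
    (a + b) ^ r ≤ a ^ r + b ^ r := by
  lift a to ℝ≥0 using ha
  lift b to ℝ≥0 using hb
  rw [← NNReal.coe_add, ← NNReal.coe_rpow, ← NNReal.coe_rpow, ← NNReal.coe_rpow,
    ← NNReal.coe_add, NNReal.coe_le_coe]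
  exact NNReal.rpow_add_le_add_rpow a b hr0 hr1

lemma lpNorm_split {n : ℕ} {q : ℝ} (hq : 1 ≤ q) (S : Finset (Fin n)) (z : Fin n → ℂ) :
    lpNorm q z ≤ lpNorm q (restrictTo S z) + lpNorm q (restrictTo Sᶜ z) := by
  have hq0 : (0:ℝ) < q := lt_of_lt_of_le one_pos hq
  have hsum : ∑ i, ‖z i‖ ^ q
      = (∑ i, ‖restrictTo S z i‖ ^ q) + ∑ i, ‖restrictTo Sᶜ z i‖ ^ q := by
    rw [← Finset.sum_add_distrib]
    refine Finset.sum_congr rfl fun i _ => ?_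
    by_cases h : i ∈ S <;>
      simp [restrictTo, h, Real.zero_rpow hq0.ne']
  have h1 : (0:ℝ) ≤ ∑ i, ‖restrictTo S z i‖ ^ q := by positivity
  have h2 : (0:ℝ) ≤ ∑ i, ‖restrictTo Sᶜ z i‖ ^ q := by positivity
  unfold lpNorm
  rw [hsum]
  exact my_rpow_add_le h1 h2 (by positivity) (by rw [div_le_one hq0]; exact hq)

lemma lpNorm_one_restrict_le {n : ℕ} (S : Finset (Fin n)) (z : Fin n → ℂ) :
    lpNorm 1 (restrictTo S z) ≤ lpNorm 1 z := by
  rw [lpNorm_one_eq, lpNorm_one_eq]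
  refine Finset.sum_le_sum fun i _ => ?_
  by_cases h : i ∈ S <;> simp [restrictTo, h]

lemma stechkin {n : ℕ} {q : ℝ} (hq : 1 ≤ q) {s : ℕ} (hs : 1 ≤ s) (z : Fin n → ℂ) :
    ∃ S : Finset (Fin n), S.card ≤ s ∧
      lpNorm q (restrictTo Sᶜ z) ≤ (s : ℝ) ^ (1 / q - 1) * lpNorm 1 z := by
  have hq0 : (0:ℝ) < q := lt_of_lt_of_le one_pos hq
  have hs0 : (0:ℝ) < (s:ℝ) := by exact_mod_cast hs
  set T : ℝ := lpNorm 1 z with hT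
  have hT0 : 0 ≤ T := by rw [hT, lpNorm_one_eq]; positivity
  have hRHS : 0 ≤ (s : ℝ) ^ (1 / q - 1) * T := by positivity
  by_cases hns : n ≤ s
  · refine ⟨Finset.univ, by simpa using hns, ?_⟩
    have : restrictTo (Finset.univ : Finset (Fin n))ᶜ z = 0 := by
      funext i; simp [restrictTo]
    rw [this]
    have : lpNorm q (0 : Fin n → ℂ) = 0 := by
      simp [lpNorm, Real.zero_rpow hq0.ne', Real.zero_rpow (inv_ne_zero hq0.ne')]
    rw [this]; exact hRHS
  push_neg at hns
  obtain ⟨S₀, _, hS₀card⟩ := Finset.exists_subset_card_eq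
    (show s ≤ (Finset.univ : Finset (Fin n)).card by simpa using hns.le)
  have hCne : (Finset.univ.powersetCard s : Finset (Finset (Fin n))).Nonempty :=
    ⟨S₀, by simp [Finset.mem_powersetCard_univ, hS₀card]⟩
  obtain ⟨S, hSmem, hSmax⟩ := Finset.exists_max_image _ (fun S => ∑ i ∈ S, ‖z i‖) hCne
  have hScard : S.card = s := (Finset.mem_powersetCard_univ).1 hSmem
  refine ⟨S, hScard.le, ?_⟩
  have hswap : ∀ i ∉ S, ∀ j ∈ S, ‖z i‖ ≤ ‖z j‖ := by
    intro i hi j hj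
    have hij : i ≠ j := fun h => hi (h ▸ hj)
    have hiE : i ∉ S.erase j := fun h => hi (Finset.mem_of_mem_erase h)
    set S' := insert i (S.erase j) with hS'
    have hS'card : S'.card = s := by
      rw [hS', Finset.card_insert_of_notMem hiE, Finset.card_erase_of_mem hj, hScard]
      omega
    have hle := hSmax S' (by simp [Finset.mem_powersetCard_univ, hS'card])
    rw [hS', Finset.sum_insert hiE] at hle
    have := Finset.add_sum_erase S (fun i => ‖z i‖) hj
    linarith
  have hsmall : ∀ i ∉ S, ‖z i‖ ≤ T / s := by
    intro i hi
    have h1 : (s : ℝ) * ‖z i‖ ≤ ∑ j ∈ S, ‖z j‖ := by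
      calc (s : ℝ) * ‖z i‖ = ∑ _j ∈ S, ‖z i‖ := by
            rw [Finset.sum_const, hScard, nsmul_eq_mul]
        _ ≤ ∑ j ∈ S, ‖z j‖ := Finset.sum_le_sum fun j hj => hswap i hi j hj
    have h2 : ∑ j ∈ S, ‖z j‖ ≤ T := by
      rw [hT, lpNorm_one_eq]
      exact Finset.sum_le_sum_of_subset_of_nonneg (Finset.subset_univ S)
        (fun _ _ _ => norm_nonneg _)
    rw [le_div_iff₀ hs0, mul_comm]
    linarith
  have hBsum : ∑ i, ‖restrictTo Sᶜ z i‖ ^ q = ∑ i ∈ Sᶜ, ‖z i‖ ^ q := by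
    rw [← Finset.sum_filter_add_sum_filter_not Finset.univ (· ∈ Sᶜ)]
    have h1 : ∀ i ∈ Finset.univ.filter (· ∈ Sᶜ), ‖restrictTo Sᶜ z i‖ ^ q = ‖z i‖ ^ q := by
      intro i hi; simp only [Finset.mem_filter] at hi; simp [restrictTo, hi.2]
    have h2 : ∀ i ∈ Finset.univ.filter (¬ · ∈ Sᶜ), ‖restrictTo Sᶜ z i‖ ^ q = 0 := by
      intro i hi; simp only [Finset.mem_filter] at hi
      simp [restrictTo, hi.2, Real.zero_rpow hq0.ne']
    rw [Finset.sum_congr rfl h1, Finset.sum_congr rfl h2, Finset.sum_const_zero, add_zero,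
      Finset.filter_mem_eq_inter, Finset.univ_inter]
  have hBle : ∑ i ∈ Sᶜ, ‖z i‖ ^ q ≤ (T / s) ^ (q - 1) * T := by
    have hstep : ∀ i ∈ Sᶜ, ‖z i‖ ^ q ≤ (T / s) ^ (q - 1) * ‖z i‖ := by
      intro i hi
      have hi' : i ∉ S := Finset.mem_compl.1 hi
      have e1 : ‖z i‖ ^ q = ‖z i‖ ^ (q - 1) * ‖z i‖ ^ (1:ℝ) := by
        rw [← Real.rpow_add' (norm_nonneg _) (by rw [sub_add_cancel]; exact hq0.ne')]
        norm_num
      rw [Real.rpow_one] at e1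
      rw [e1]
      exact mul_le_mul_of_nonneg_right
        (Real.rpow_le_rpow (norm_nonneg _) (hsmall i hi') (by linarith)) (norm_nonneg _)
    calc ∑ i ∈ Sᶜ, ‖z i‖ ^ q ≤ ∑ i ∈ Sᶜ, (T / s) ^ (q - 1) * ‖z i‖ :=
          Finset.sum_le_sum hstep
      _ = (T / s) ^ (q - 1) * ∑ i ∈ Sᶜ, ‖z i‖ := by rw [Finset.mul_sum]
      _ ≤ (T / s) ^ (q - 1) * T := by
          refine mul_le_mul_of_nonneg_left ?_ (by positivity)
          rw [hT, lpNorm_one_eq]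
          exact Finset.sum_le_sum_of_subset_of_nonneg (Finset.subset_univ _)
            (fun _ _ _ => norm_nonneg _)
  have hiden : (T / s) ^ (q - 1) * T = ((s : ℝ) ^ (1 / q - 1) * T) ^ q := by
    have hsq : ((s:ℝ) ^ ((1:ℝ) / q - 1)) ^ q = (s:ℝ) ^ (1 - q) := by
      rw [← Real.rpow_mul hs0.le]
      congr 1; field_simp
    rcases eq_or_lt_of_le hT0 with h0 | hTpos
    · rw [← h0]; simp [Real.zero_rpow hq0.ne']
    · have e2 : T ^ (q - 1) * T ^ (1:ℝ) = T ^ q := by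
        rw [← Real.rpow_add hTpos]; norm_num
      rw [Real.rpow_one] at e2
      rw [Real.mul_rpow (by positivity) hT0, hsq, Real.div_rpow hT0 hs0.le, ← e2,
        show (1:ℝ) - q = -(q - 1) by ring, Real.rpow_neg hs0.le]
      ring
  have hfinal : lpNorm q (restrictTo Sᶜ z) ≤ (((s : ℝ) ^ (1 / q - 1) * T) ^ q) ^ (1/q) := by
    unfold lpNorm
    rw [hBsum]
    refine Real.rpow_le_rpow (by positivity) ?_ (by positivity)
    rw [← hiden]; exact hBle
  rw [← Real.rpow_mul (mul_nonneg (by positivity) hT0)] at hfinal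
  rw [mul_one_div, div_self hq0.ne', Real.rpow_one] at hfinal
  exact hfinal

end AUX

lemma key_real {m N : ℕ} (A : Matrix (Fin m) (Fin N) ℂ)
    (nn : (Fin m → ℂ) → ℝ) (q : ℝ) (hq : 1 ≤ q) (s : ℕ) (hs : 1 ≤ s)
    (ρ τ : ℝ) (hρ0 : 0 < ρ) (hτ : 0 < τ)
    (hNSP : RNSP A (fun v => (s : ℝ) ^ ((1 : ℝ) / q - 1 / 2) * nn v) q s ρ τ)
    (e : Fin m → ℂ) (hnn : 0 < nn e) (z : Fin N → ℂ) (hz : A.mulVec z = e) :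
    ((s : ℝ) ^ ((1 : ℝ) / 2 - 1 / q) * lpNorm q z
        + (s : ℝ) ^ (-(1 : ℝ) / 2) * lpNorm 1 z) / nn e
      ≤ (ρ + 2) * (lpNorm 1 z / ((s : ℝ) ^ ((1 : ℝ) / 2) * nn e)) + τ := by
  have hq0 : (0:ℝ) < q := lt_of_lt_of_le one_pos hq
  have hs0 : (0:ℝ) < (s:ℝ) := by exact_mod_cast hs
  set Lq := lpNorm q z with hLqdef
  set L1 := lpNorm 1 z with hL1def
  have hLq0 : 0 ≤ Lq := lpNorm_nonneg _ _
  have hL10 : 0 ≤ L1 := lpNorm_nonneg _ _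
  set a : ℝ := (s:ℝ) ^ ((1:ℝ)/2 - 1/q) with ha
  set b : ℝ := (s:ℝ) ^ ((1:ℝ)/2) with hb
  have ha0 : 0 < a := Real.rpow_pos_of_pos hs0 _
  have hb0 : 0 < b := Real.rpow_pos_of_pos hs0 _
  have hbinv : (s:ℝ) ^ (-(1:ℝ)/2) = b⁻¹ := by
    rw [hb, show (-(1:ℝ)/2) = -((1:ℝ)/2) by ring, Real.rpow_neg hs0.le]
  have ha1 : a * (s:ℝ) ^ ((1:ℝ)/q - 1) = b⁻¹ := by
    rw [ha, ← Real.rpow_add hs0, ← hbinv]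
    congr 1; ring
  have ha2 : a * (s:ℝ) ^ ((1:ℝ)/q - 1/2) = 1 := by
    rw [ha, ← Real.rpow_add hs0, show ((1:ℝ)/2 - 1/q + (1/q - 1/2)) = 0 by ring,
      Real.rpow_zero]
  -- NSP + stechkin bounds
  obtain ⟨S, hScard, hSbound⟩ := stechkin hq hs z
  have hNSP' := hNSP S hScard z
  simp only [hz] at hNSP'
  have hsplit := lpNorm_split hq S z
  have hrest := lpNorm_one_restrict_le Sᶜ z
  have hcoef : (0:ℝ) ≤ (s:ℝ) ^ (1/q - 1) * ρ := by positivity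
  have hLq : Lq ≤ (s:ℝ) ^ ((1:ℝ)/q - 1) * ρ * L1 + (s:ℝ) ^ ((1:ℝ)/q - 1) * L1
      + τ * ((s:ℝ) ^ ((1:ℝ)/q - 1/2) * nn e) := by
    have h4 : (s:ℝ) ^ (1/q - 1) * ρ * lpNorm 1 (restrictTo Sᶜ z)
        ≤ (s:ℝ) ^ (1/q - 1) * ρ * L1 := mul_le_mul_of_nonneg_left hrest hcoef
    have : (1:ℝ)/q - 1 = 1/q - 1 := rfl
    linarith [hsplit, hNSP', hSbound]
  -- multiply by a
  have hp1 : a * Lq ≤ b⁻¹ * ρ * L1 + b⁻¹ * L1 + τ * nn e := by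
    calc a * Lq ≤ a * ((s:ℝ) ^ ((1:ℝ)/q - 1) * ρ * L1 + (s:ℝ) ^ ((1:ℝ)/q - 1) * L1
          + τ * ((s:ℝ) ^ ((1:ℝ)/q - 1/2) * nn e)) := mul_le_mul_of_nonneg_left hLq ha0.le
      _ = (a * (s:ℝ) ^ ((1:ℝ)/q - 1)) * ρ * L1 + (a * (s:ℝ) ^ ((1:ℝ)/q - 1)) * L1
          + τ * ((a * (s:ℝ) ^ ((1:ℝ)/q - 1/2)) * nn e) := by ring
      _ = b⁻¹ * ρ * L1 + b⁻¹ * L1 + τ * (1 * nn e) := by rw [ha1, ha2]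
      _ = b⁻¹ * ρ * L1 + b⁻¹ * L1 + τ * nn e := by ring
  rw [div_le_iff₀ hnn, hbinv]
  have hr : ((ρ + 2) * (L1 / (b * nn e)) + τ) * nn e
      = (ρ + 2) * b⁻¹ * L1 + τ * nn e := by
    field_simp
  rw [hr]
  have hexp : (ρ + 2) * b⁻¹ * L1 = b⁻¹ * ρ * L1 + b⁻¹ * L1 + b⁻¹ * L1 := by ring
  have hbL : 0 ≤ b⁻¹ * L1 := by positivity
  linarith [hp1]

/-- Under the `ℓ^q`-robust null space property relative to the rescaled norm
`s^(1/q - 1/2) ‖·‖`, the simultaneous quotient is controlled by the `ℓ^1`-quotient: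
`Q_s(A)_{q,1} ≤ (ρ + 2) Q_s(A)_1 + τ`. -/
theorem stmt3 {m N : ℕ} (A : Matrix (Fin m) (Fin N) ℂ)
    (nn : (Fin m → ℂ) → ℝ)
    (nn_add : ∀ x y, nn (x + y) ≤ nn x + nn y)
    (nn_smul : ∀ (c : ℂ) x, nn (c • x) = ‖c‖ * nn x)
    (nn_eq_zero : ∀ x, nn x = 0 ↔ x = 0)
    (q : ℝ) (hq : 1 ≤ q) (s : ℕ) (hs : 1 ≤ s)
    (ρ τ : ℝ) (hρ0 : 0 < ρ) (hρ1 : ρ < 1) (hτ : 0 < τ)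
    (hNSP : RNSP A (fun v => (s : ℝ) ^ ((1 : ℝ) / q - 1 / 2) * nn v) q s ρ τ) :
    quotSimul A nn q s ≤ ENNReal.ofReal (ρ + 2) * quotL1 A nn s + ENNReal.ofReal τ := by
  have hρ2 : (0:ℝ) < ρ + 2 := by linarith
  have hc0 : ENNReal.ofReal (ρ + 2) ≠ 0 := by
    simp only [ne_eq, ENNReal.ofReal_eq_zero, not_le]; exact hρ2
  rw [quotSimul]
  refine iSup₂_le fun e he => ?_
  have he' : e ≠ 0 := he
  -- nn e > 0
  have hnn0 : 0 ≤ nn e := by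
    have h0 : nn (0 : Fin m → ℂ) = 0 := (nn_eq_zero 0).2 rfl
    have hneg : nn ((-1 : ℂ) • e) = nn e := by rw [nn_smul]; simp
    have hadd := nn_add e ((-1 : ℂ) • e)
    have hsum : e + (-1 : ℂ) • e = 0 := by simp
    rw [hsum, h0, hneg] at hadd
    linarith
  have hnn : 0 < nn e :=
    lt_of_le_of_ne hnn0 (fun h => he' ((nn_eq_zero e).1 h.symm))
  -- pointwise ENNReal bound
  have hpoint : ∀ z : Fin N → ℂ, A.mulVec z = e →
      ENNReal.ofReal (((s : ℝ) ^ ((1 : ℝ) / 2 - 1 / q) * lpNorm q z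
            + (s : ℝ) ^ (-(1 : ℝ) / 2) * lpNorm 1 z) / nn e)
        ≤ ENNReal.ofReal (ρ + 2)
            * ENNReal.ofReal (lpNorm 1 z / ((s : ℝ) ^ ((1 : ℝ) / 2) * nn e))
            + ENNReal.ofReal τ := by
    intro z hz
    have hreal := key_real A nn q hq s hs ρ τ hρ0 hτ hNSP e hnn z hz
    have hnn2 : 0 ≤ lpNorm 1 z / ((s : ℝ) ^ ((1 : ℝ) / 2) * nn e) := by
      have := lpNorm_nonneg 1 z
      have hs0 : (0:ℝ) < (s:ℝ) := by exact_mod_cast hs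
      positivity
    calc ENNReal.ofReal _ ≤ ENNReal.ofReal ((ρ + 2)
          * (lpNorm 1 z / ((s : ℝ) ^ ((1 : ℝ) / 2) * nn e)) + τ) :=
          ENNReal.ofReal_le_ofReal hreal
      _ = ENNReal.ofReal ((ρ + 2) * (lpNorm 1 z / ((s : ℝ) ^ ((1 : ℝ) / 2) * nn e)))
          + ENNReal.ofReal τ := ENNReal.ofReal_add (by positivity) hτ.le
      _ = ENNReal.ofReal (ρ + 2)
          * ENNReal.ofReal (lpNorm 1 z / ((s : ℝ) ^ ((1 : ℝ) / 2) * nn e))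
          + ENNReal.ofReal τ := by rw [ENNReal.ofReal_mul hρ2.le]
  by_cases hex : ∃ z : Fin N → ℂ, A.mulVec z = e
  · obtain ⟨z₀, hz₀⟩ := hex
    set I : ℝ≥0∞ := ⨅ z ∈ {z : Fin N → ℂ | A.mulVec z = e},
        ENNReal.ofReal (lpNorm 1 z / ((s : ℝ) ^ ((1 : ℝ) / 2) * nn e)) with hI
    have hIle : I ≤ quotL1 A nn s := by
      rw [quotL1]
      exact le_iSup₂_of_le e he le_rfl
    have hle0 : I ≤ ENNReal.ofReal (lpNorm 1 z₀ / ((s : ℝ) ^ ((1 : ℝ) / 2) * nn e)) :=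
      iInf₂_le z₀ hz₀
    have hInetop : I ≠ ⊤ := ne_top_of_le_ne_top ENNReal.ofReal_ne_top hle0
    refine ENNReal.le_of_forall_pos_le_add fun ε hε hlt => ?_
    set δ : ℝ≥0∞ := (ε : ℝ≥0∞) / ENNReal.ofReal (ρ + 2) with hδ
    have hδ0 : δ ≠ 0 := by
      simp [hδ, ENNReal.div_eq_zero_iff, hε.ne', ENNReal.ofReal_ne_top]
    have hzex : ∃ z ∈ {z : Fin N → ℂ | A.mulVec z = e},
        ENNReal.ofReal (lpNorm 1 z / ((s : ℝ) ^ ((1 : ℝ) / 2) * nn e)) < I + δ := by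
      by_contra hcon
      push_neg at hcon
      have hle : I + δ ≤ I := by rw [hI]; exact le_iInf₂ hcon
      exact absurd (lt_of_lt_of_le (ENNReal.lt_add_right hInetop hδ0) hle) (lt_irrefl _)
    obtain ⟨z, hz, hzval⟩ := hzex
    have hz' : A.mulVec z = e := hz
    calc (⨅ z ∈ {z : Fin N → ℂ | A.mulVec z = e}, ENNReal.ofReal
            (((s : ℝ) ^ ((1 : ℝ) / 2 - 1 / q) * lpNorm q z
              + (s : ℝ) ^ (-(1 : ℝ) / 2) * lpNorm 1 z) / nn e))
        ≤ ENNReal.ofReal (((s : ℝ) ^ ((1 : ℝ) / 2 - 1 / q) * lpNorm q z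
              + (s : ℝ) ^ (-(1 : ℝ) / 2) * lpNorm 1 z) / nn e) := iInf₂_le z hz
      _ ≤ ENNReal.ofReal (ρ + 2)
            * ENNReal.ofReal (lpNorm 1 z / ((s : ℝ) ^ ((1 : ℝ) / 2) * nn e))
            + ENNReal.ofReal τ := hpoint z hz'
      _ ≤ ENNReal.ofReal (ρ + 2) * (I + δ) + ENNReal.ofReal τ :=
            add_le_add_left (mul_le_mul_right hzval.le _) _
      _ = ENNReal.ofReal (ρ + 2) * I + ENNReal.ofReal (ρ + 2) * δ + ENNReal.ofReal τ := by
            rw [mul_add]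
      _ = ENNReal.ofReal (ρ + 2) * I + ε + ENNReal.ofReal τ := by
            rw [hδ, ENNReal.mul_div_cancel hc0 ENNReal.ofReal_ne_top]
      _ ≤ ENNReal.ofReal (ρ + 2) * quotL1 A nn s + ε + ENNReal.ofReal τ := by
            gcongr
      _ = ENNReal.ofReal (ρ + 2) * quotL1 A nn s + ENNReal.ofReal τ + ε := by
            ring
  · -- no preimage: quotL1 is ⊤
    have htop : quotL1 A nn s = ⊤ := by
      refine top_unique ?_
      rw [quotL1]
      refine le_trans ?_ (le_iSup₂_of_le e he le_rfl)
      rw [iInf_eq_top.2 fun z => iInf_eq_top.2 fun hz => absurd ⟨z, hz⟩ hex]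
    rw [htop, ENNReal.mul_top hc0, top_add]
    exact le_top
end

section
/- For all x ∈ [0, 1], arcsin(x) ≥ π/2 − √(π(1−x)), and for all x ∈ [−1, 0], arcsin(x) ≤ −π/2 + √(π(1+x)). -/
open Real

lemma cos_le_aux {t : ℝ} (h0 : 0 ≤ t) (h1 : t ≤ Real.pi / 2) :
    Real.cos t ≤ 1 - t ^ 2 / Real.pi := by
  rcases eq_or_lt_of_le h0 with h | h
  · simp [← h]
  · have hpi : Real.pi ≤ 3.15 := by linarith [Real.pi_lt_d2]
    have hpi2 : 3.14 < Real.pi := by linarith [Real.pi_gt_d6]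
    have ht2 : t / 2 ≤ 1 := by nlinarith
    have hu : t ^ 2 ≤ 2.49 := by nlinarith
    have hsin : t / 2 - (t / 2) ^ 3 / 4 < Real.sin (t / 2) := by
      have := Real.sin_gt_sub_cube (x := t / 2) (by linarith)
      nlinarith [pow_pos (show (0:ℝ) < t / 2 by linarith) 3]
    have hcos : Real.cos t = 1 - 2 * Real.sin (t / 2) ^ 2 := by
      have h2 : Real.cos (t / 2) ^ 2 = 1 - Real.sin (t / 2) ^ 2 := Real.cos_sq' (t / 2)
      have h3 := Real.cos_two_mul (t / 2)
      rw [show 2 * (t / 2) = t by ring] at h3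
      rw [h3, h2]; ring
    have hpos : 0 < t / 2 - (t / 2) ^ 3 / 4 := by nlinarith
    have hsq : (t / 2 - (t / 2) ^ 3 / 4) ^ 2 < Real.sin (t / 2) ^ 2 := by
      nlinarith [hsin, hpos]
    rw [hcos]
    have h16 : (13.51 : ℝ) ≤ 16 - t ^ 2 := by linarith
    have h16sq : (13.51 : ℝ) ^ 2 ≤ (16 - t ^ 2) ^ 2 := by nlinarith
    have h512 : (512 : ℝ) ≤ Real.pi * (16 - t ^ 2) ^ 2 := by nlinarith
    have key : t ^ 2 / Real.pi ≤ 2 * (t / 2 - (t / 2) ^ 3 / 4) ^ 2 := by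
      rw [div_le_iff₀ Real.pi_pos]
      nlinarith [mul_le_mul_of_nonneg_left h512 (sq_nonneg t)]
    nlinarith [hsq, key]

lemma arcsin_lower {x : ℝ} (hx : x ∈ Set.Icc (0 : ℝ) 1) :
    Real.pi / 2 - Real.sqrt (Real.pi * (1 - x)) ≤ Real.arcsin x := by
  obtain ⟨h0, h1⟩ := hx
  set t := Real.arccos x with ht
  have ht0 : 0 ≤ t := Real.arccos_nonneg x
  have ht1 : t ≤ Real.pi / 2 := Real.arccos_le_pi_div_two.mpr h0
  have hcos : Real.cos t = x := Real.cos_arccos (by linarith) h1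
  have hle : Real.cos t ≤ 1 - t ^ 2 / Real.pi := cos_le_aux ht0 ht1
  have hsq : t ^ 2 ≤ Real.pi * (1 - x) := by
    rw [hcos] at hle
    have h' : t ^ 2 / Real.pi ≤ 1 - x := by linarith
    rw [div_le_iff₀ Real.pi_pos] at h'
    nlinarith [h']
  have hts : t ≤ Real.sqrt (Real.pi * (1 - x)) := by
    rw [show t = Real.sqrt (t ^ 2) by rw [Real.sqrt_sq ht0]]
    exact Real.sqrt_le_sqrt hsq
  have harc : Real.arcsin x = Real.pi / 2 - t := by
    rw [ht, Real.arccos]; ring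
  rw [harc]; linarith

/-- `arcsin x ≥ π/2 − √(π(1−x))` on `[0,1]`, and
`arcsin x ≤ −π/2 + √(π(1+x))` on `[−1,0]`. -/
theorem stmt13 :
    (∀ x : ℝ, x ∈ Set.Icc (0 : ℝ) 1 →
      Real.pi / 2 - Real.sqrt (Real.pi * (1 - x)) ≤ Real.arcsin x) ∧
    (∀ x : ℝ, x ∈ Set.Icc (-1 : ℝ) 0 →
      Real.arcsin x ≤ -(Real.pi / 2) + Real.sqrt (Real.pi * (1 + x))) := by
  constructor
  · exact fun x hx => arcsin_lower hx
  · intro x hx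
    obtain ⟨h0, h1⟩ := hx
    have := arcsin_lower (x := -x) ⟨by linarith, by linarith⟩
    rw [Real.arcsin_neg] at this
    have h2 : (1 : ℝ) - (-x) = 1 + x := by ring
    rw [h2] at this
    linarith
end

section
/- Let Φ = {φ_j}_{j=1}^N be a bounded orthonormal system with constant K on a domain D with probability measure ν, and let t_1, …, t_m be i.i.d. samples from ν, defining A_{ij} = m^{−1/2} φ_j(t_i). Fix 0 < ε < 1 and τ > 0, and suppose ‖C_N − 1‖_{L^∞(−1+ε, 1−ε)} ≤ τ where C_N(t) = (1/N) Σ_{j=1}^N |φ_j(t)|² and D = [−1,1] with ν the Chebyshev measure. Then the distortion ξ := E[max_{i∈[m]} |(m/N)‖a_i‖_2² − 1|] satisfies ξ ≤ τ + 2(K² + 1) m √(ε/π). -/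
open MeasureTheory Set intervalIntegral

/-- The Chebyshev (arcsine) probability measure on `[−1,1]`,
`dν = π⁻¹ (1 − t²)^{−1/2} dt`. -/
noncomputable def chebMeasure : Measure ℝ :=
  (volume.restrict (Set.Icc (-1 : ℝ) 1)).withDensity
    (fun t => ENNReal.ofReal ((Real.pi * Real.sqrt (1 - t ^ 2))⁻¹))

lemma sqle {a b : ℝ} (ha : 0 ≤ a) (hb : 0 ≤ b) (h : a ^ 2 ≤ b ^ 2) : a ≤ b := by
  calc a = Real.sqrt (a ^ 2) := (Real.sqrt_sq ha).symm
    _ ≤ Real.sqrt (b ^ 2) := Real.sqrt_le_sqrt h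
    _ = b := Real.sqrt_sq hb

lemma densR {t : ℝ} (h1 : (3:ℝ)/2 ≤ 1 + t) (h2 : t ≤ 1) :
    (Real.pi * Real.sqrt (1 - t ^ 2))⁻¹
      ≤ (Real.sqrt 2 / (Real.pi * Real.sqrt 3)) * (1 - t) ^ (-(2⁻¹) : ℝ) := by
  rcases eq_or_lt_of_le h2 with rfl | h2
  · simp only [one_pow, sub_self, Real.sqrt_zero, mul_zero, inv_zero]
    rw [Real.zero_rpow (by norm_num)]
    simp
  · have h3 : Real.sqrt (1 - t ^ 2) = Real.sqrt (1 - t) * Real.sqrt (1 + t) := by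
      rw [← Real.sqrt_mul (by linarith)]; ring_nf
    have hlt : 0 < 1 - t := by linarith
    have h4 : (1 - t : ℝ) ^ (-(2⁻¹) : ℝ) = (Real.sqrt (1 - t))⁻¹ := by
      rw [Real.rpow_neg hlt.le, Real.sqrt_eq_rpow]; norm_num
    rw [h4, h3]
    set A := Real.sqrt (1 - t) with hA
    set B := Real.sqrt (1 + t) with hB
    have hsp : (0:ℝ) < A := Real.sqrt_pos.2 hlt
    have hge : Real.sqrt 3 / Real.sqrt 2 ≤ B := by
      rw [← Real.sqrt_div (by norm_num)]
      exact Real.sqrt_le_sqrt (by linarith)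
    have h0 : 0 < Real.pi * (A * (Real.sqrt 3 / Real.sqrt 2)) := by positivity
    have step : (Real.pi * (A * B))⁻¹ ≤ (Real.pi * (A * (Real.sqrt 3 / Real.sqrt 2)))⁻¹ := by
      apply inv_anti₀ h0
      have := Real.pi_pos
      gcongr
    refine step.trans (le_of_eq ?_)
    have h2' : Real.sqrt 2 ≠ 0 := by positivity
    have h3' : Real.sqrt 3 ≠ 0 := by positivity
    have hπ : Real.pi ≠ 0 := Real.pi_ne_zero
    field_simp

lemma densL {t : ℝ} (h1 : (3:ℝ)/2 ≤ 1 - t) (h2 : -1 ≤ t) :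
    (Real.pi * Real.sqrt (1 - t ^ 2))⁻¹
      ≤ (Real.sqrt 2 / (Real.pi * Real.sqrt 3)) * (1 + t) ^ (-(2⁻¹) : ℝ) := by
  have h5 : 1 - t ^ 2 = 1 - (-t) ^ 2 := by ring
  have h6 : 1 + t = 1 - (-t) := by ring
  rw [h5, h6]
  exact densR (by linarith) (by linarith)

lemma densMid {t : ℝ} (h1 : t ^ 2 ≤ (1:ℝ)/4) :
    (Real.pi * Real.sqrt (1 - t ^ 2))⁻¹ ≤ 2 / (Real.pi * Real.sqrt 3) := by
  have hge : Real.sqrt 3 / 2 ≤ Real.sqrt (1 - t ^ 2) := by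
    have : Real.sqrt 3 / 2 = Real.sqrt (3/4) := by
      rw [show (3:ℝ)/4 = 3 / 2^2 by norm_num, Real.sqrt_div' 3 (by norm_num), Real.sqrt_sq]
      norm_num
    rw [this]
    exact Real.sqrt_le_sqrt (by linarith)
  have h0 : 0 < Real.pi * (Real.sqrt 3 / 2) := by positivity
  have step : (Real.pi * Real.sqrt (1 - t ^ 2))⁻¹ ≤ (Real.pi * (Real.sqrt 3 / 2))⁻¹ := by
    apply inv_anti₀ h0
    have := Real.pi_pos
    gcongr
  refine step.trans (le_of_eq ?_)
  have h3' : Real.sqrt 3 ≠ 0 := by positivity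
  field_simp

lemma intR (a : ℝ) (ha : a ≤ 1) :
    ∫ t in a..1, (1 - t) ^ (-(2⁻¹) : ℝ) = 2 * Real.sqrt (1 - a) := by
  have : (∫ t in a..1, (fun x : ℝ => x ^ (-(2⁻¹) : ℝ)) (1 - t))
      = ∫ x in (1 - 1)..(1 - a), x ^ (-(2⁻¹) : ℝ) :=
    integral_comp_sub_left (fun x : ℝ => x ^ (-(2⁻¹) : ℝ)) 1
  simp only [sub_self] at this
  rw [this, integral_rpow (Or.inl (by norm_num)), Real.zero_rpow (by norm_num),
    show (-(2⁻¹) : ℝ) + 1 = 2⁻¹ by norm_num,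
    show ((1 - a) : ℝ) ^ (2⁻¹ : ℝ) = Real.sqrt (1 - a) by rw [Real.sqrt_eq_rpow]; norm_num]
  ring

lemma intL (b : ℝ) (hb : -1 ≤ b) :
    ∫ t in (-1 : ℝ)..b, (1 + t) ^ (-(2⁻¹) : ℝ) = 2 * Real.sqrt (b + 1) := by
  have : (∫ t in (-1 : ℝ)..b, (fun x : ℝ => x ^ (-(2⁻¹) : ℝ)) (t - (-1)))
      = ∫ x in (-1 - -1 : ℝ)..(b - -1), x ^ (-(2⁻¹) : ℝ) :=
    integral_comp_sub_right (fun x : ℝ => x ^ (-(2⁻¹) : ℝ)) (-1)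
  simp only [sub_neg_eq_add, neg_add_cancel] at this
  simp only [show ∀ t : ℝ, (1 + t) = t + 1 from fun t => add_comm 1 t]
  rw [this, integral_rpow (Or.inl (by norm_num)), Real.zero_rpow (by norm_num),
    show (-(2⁻¹) : ℝ) + 1 = 2⁻¹ by norm_num,
    show ((b + 1) : ℝ) ^ (2⁻¹ : ℝ) = Real.sqrt (b + 1) by rw [Real.sqrt_eq_rpow]; norm_num]
  ring

lemma edgeR (a c : ℝ) (ha : a ≤ 1) (hc : 0 ≤ c)
    (hb : ∀ t ∈ Set.Ioc a 1, (Real.pi * Real.sqrt (1 - t ^ 2))⁻¹ ≤ c * (1 - t) ^ (-(2⁻¹) : ℝ)) :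
    ∫⁻ t in Set.Ioc a 1, ENNReal.ofReal ((Real.pi * Real.sqrt (1 - t ^ 2))⁻¹)
      ≤ ENNReal.ofReal (c * (2 * Real.sqrt (1 - a))) := by
  have hint : IntervalIntegrable (fun t : ℝ => c * (1 - t) ^ (-(2⁻¹) : ℝ)) volume a 1 := by
    apply IntervalIntegrable.const_mul
    have := (intervalIntegrable_rpow' (a := (0 : ℝ)) (b := 1 - a) (r := -(2⁻¹))
      (by norm_num)).comp_sub_left 1
    simpa using this.symm
  have hfi : IntegrableOn (fun t : ℝ => c * (1 - t) ^ (-(2⁻¹) : ℝ)) (Set.Ioc a 1) volume :=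
    (intervalIntegrable_iff_integrableOn_Ioc_of_le ha).mp hint
  calc ∫⁻ t in Set.Ioc a 1, ENNReal.ofReal ((Real.pi * Real.sqrt (1 - t ^ 2))⁻¹)
      ≤ ∫⁻ t in Set.Ioc a 1, ENNReal.ofReal (c * (1 - t) ^ (-(2⁻¹) : ℝ)) :=
        setLIntegral_mono' measurableSet_Ioc (fun t ht => ENNReal.ofReal_le_ofReal (hb t ht))
    _ = ENNReal.ofReal (∫ t in Set.Ioc a 1, c * (1 - t) ^ (-(2⁻¹) : ℝ)) := by
        rw [ofReal_integral_eq_lintegral_ofReal hfi]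
        refine (ae_restrict_iff' measurableSet_Ioc).2 (Filter.Eventually.of_forall fun t ht => ?_)
        exact mul_nonneg hc (Real.rpow_nonneg (by linarith [ht.2]) _)
    _ ≤ ENNReal.ofReal (c * (2 * Real.sqrt (1 - a))) := by
        rw [← intervalIntegral.integral_of_le ha, intervalIntegral.integral_const_mul, intR a ha]

lemma edgeL (b c : ℝ) (hb : -1 ≤ b) (hc : 0 ≤ c)
    (hbd : ∀ t ∈ Set.Ioc (-1 : ℝ) b, (Real.pi * Real.sqrt (1 - t ^ 2))⁻¹ ≤ c * (1 + t) ^ (-(2⁻¹) : ℝ)) :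
    ∫⁻ t in Set.Ioc (-1 : ℝ) b, ENNReal.ofReal ((Real.pi * Real.sqrt (1 - t ^ 2))⁻¹)
      ≤ ENNReal.ofReal (c * (2 * Real.sqrt (b + 1))) := by
  have hint : IntervalIntegrable (fun t : ℝ => c * (1 + t) ^ (-(2⁻¹) : ℝ)) volume (-1) b := by
    apply IntervalIntegrable.const_mul
    have := (intervalIntegrable_rpow' (a := (0 : ℝ)) (b := b + 1) (r := -(2⁻¹))
      (by norm_num)).comp_sub_right (-1)
    simp only [zero_sub, sub_neg_eq_add] at this
    have h3 : (fun x : ℝ => (1 + x) ^ (-(2⁻¹) : ℝ))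
        = fun x : ℝ => (x + 1) ^ (-(2⁻¹) : ℝ) := by funext x; rw [add_comm]
    rw [h3]
    simpa using this
  have hfi : IntegrableOn (fun t : ℝ => c * (1 + t) ^ (-(2⁻¹) : ℝ)) (Set.Ioc (-1 : ℝ) b) volume :=
    (intervalIntegrable_iff_integrableOn_Ioc_of_le hb).mp hint
  calc ∫⁻ t in Set.Ioc (-1 : ℝ) b, ENNReal.ofReal ((Real.pi * Real.sqrt (1 - t ^ 2))⁻¹)
      ≤ ∫⁻ t in Set.Ioc (-1 : ℝ) b, ENNReal.ofReal (c * (1 + t) ^ (-(2⁻¹) : ℝ)) :=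
        setLIntegral_mono' measurableSet_Ioc (fun t ht => ENNReal.ofReal_le_ofReal (hbd t ht))
    _ = ENNReal.ofReal (∫ t in Set.Ioc (-1 : ℝ) b, c * (1 + t) ^ (-(2⁻¹) : ℝ)) := by
        rw [ofReal_integral_eq_lintegral_ofReal hfi]
        refine (ae_restrict_iff' measurableSet_Ioc).2 (Filter.Eventually.of_forall fun t ht => ?_)
        exact mul_nonneg hc (Real.rpow_nonneg (by linarith [ht.1]) _)
    _ ≤ ENNReal.ofReal (c * (2 * Real.sqrt (b + 1))) := by
        rw [← intervalIntegral.integral_of_le hb, intervalIntegral.integral_const_mul, intL b hb]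

lemma chebBad (ε : ℝ) (h0 : 0 < ε) (h1 : ε < 1) :
    chebMeasure ((Set.Icc (-1 + ε) (1 - ε))ᶜ) ≤ ENNReal.ofReal (2 * Real.sqrt (ε / Real.pi)) := by
  have hms : MeasurableSet ((Set.Icc (-1 + ε) (1 - ε))ᶜ) := measurableSet_Icc.compl
  set f : ℝ → ENNReal := fun t => ENNReal.ofReal ((Real.pi * Real.sqrt (1 - t ^ 2))⁻¹) with hf
  have happ : chebMeasure ((Set.Icc (-1 + ε) (1 - ε))ᶜ)
      = ∫⁻ t in (Set.Icc (-1 + ε) (1 - ε))ᶜ ∩ Set.Icc (-1 : ℝ) 1, f t := by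
    rw [chebMeasure, withDensity_apply _ hms, Measure.restrict_restrict hms]
  have hsub : (Set.Icc (-1 + ε) (1 - ε))ᶜ ∩ Set.Icc (-1 : ℝ) 1
      ⊆ Set.Ico (-1 : ℝ) (-1 + ε) ∪ Set.Ioc (1 - ε) 1 := by
    intro x ⟨hx1, hx2⟩
    simp only [Set.mem_Icc, not_and, not_le, Set.mem_compl_iff] at hx1
    rcases lt_or_ge x (-1 + ε) with h | h
    · exact Or.inl ⟨hx2.1, h⟩
    · exact Or.inr ⟨hx1 h, hx2.2⟩
  have hIco : ∫⁻ t in Set.Ico (-1 : ℝ) (-1 + ε), f t = ∫⁻ t in Set.Ioc (-1 : ℝ) (-1 + ε), f t :=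
    setLIntegral_congr Ico_ae_eq_Ioc
  have hmain : chebMeasure ((Set.Icc (-1 + ε) (1 - ε))ᶜ)
      ≤ (∫⁻ t in Set.Ioc (-1 : ℝ) (-1 + ε), f t) + ∫⁻ t in Set.Ioc (1 - ε) 1, f t := by
    rw [happ, ← hIco]
    exact (lintegral_mono_set hsub).trans (lintegral_union_le _ _ _)
  have hc : (0:ℝ) ≤ Real.sqrt 2 / (Real.pi * Real.sqrt 3) := by positivity
  have hsqrtdiv : Real.sqrt (ε / Real.pi) = Real.sqrt ε / Real.sqrt Real.pi :=
    Real.sqrt_div h0.le _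
  have hp2 : Real.sqrt Real.pi ^ 2 = Real.pi := Real.sq_sqrt Real.pi_pos.le
  have h22 : Real.sqrt 2 ^ 2 = 2 := Real.sq_sqrt (by norm_num)
  have h32 : Real.sqrt 3 ^ 2 = 3 := Real.sq_sqrt (by norm_num)
  have hppos : (0:ℝ) < Real.sqrt Real.pi := Real.sqrt_pos.2 Real.pi_pos
  have h2pos : (0:ℝ) < Real.sqrt 2 := Real.sqrt_pos.2 (by norm_num)
  have h3pos : (0:ℝ) < Real.sqrt 3 := Real.sqrt_pos.2 (by norm_num)
  have hπ := Real.pi_gt_d6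
  have hεs : Real.sqrt ε ^ 2 = ε := Real.sq_sqrt h0.le
  have hεpos : 0 < Real.sqrt ε := Real.sqrt_pos.2 h0
  rcases le_or_gt ε 2⁻¹ with hcase | hcase
  · -- small ε
    have hR : ∫⁻ t in Set.Ioc (1 - ε) 1, f t
        ≤ ENNReal.ofReal ((Real.sqrt 2 / (Real.pi * Real.sqrt 3)) * (2 * Real.sqrt (1 - (1 - ε)))) := by
      apply edgeR _ _ (by linarith) hc
      intro u hu
      exact densR (by rcases hu with ⟨hu1, hu2⟩; linarith) hu.2
    have hL : ∫⁻ t in Set.Ioc (-1 : ℝ) (-1 + ε), f t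
        ≤ ENNReal.ofReal ((Real.sqrt 2 / (Real.pi * Real.sqrt 3)) * (2 * Real.sqrt ((-1 + ε) + 1))) := by
      apply edgeL _ _ (by linarith) hc
      intro u hu
      exact densL (by rcases hu with ⟨hu1, hu2⟩; linarith) hu.1.le
    rw [show (1 : ℝ) - (1 - ε) = ε by ring] at hR
    rw [show (-1 : ℝ) + ε + 1 = ε by ring] at hL
    refine hmain.trans ((add_le_add hL hR).trans ?_)
    rw [← ENNReal.ofReal_add (by positivity) (by positivity)]
    apply ENNReal.ofReal_le_ofReal
    rw [hsqrtdiv]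
    have key : Real.sqrt 2 * 2 * Real.sqrt Real.pi ≤ Real.pi * Real.sqrt 3 := by
      apply sqle (by positivity) (by positivity)
      have e1 : (Real.sqrt 2 * 2 * Real.sqrt Real.pi) ^ 2 = Real.sqrt 2 ^ 2 * 4 * Real.sqrt Real.pi ^ 2 := by
        ring
      have e2 : (Real.pi * Real.sqrt 3) ^ 2 = Real.pi ^ 2 * Real.sqrt 3 ^ 2 := by ring
      rw [e1, e2, h22, hp2, h32]
      nlinarith [hπ, Real.pi_pos]
    have h5 : Real.sqrt 2 / (Real.pi * Real.sqrt 3) * (2 * Real.sqrt ε)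
        ≤ Real.sqrt ε / Real.sqrt Real.pi := by
      rw [div_mul_eq_mul_div, div_le_div_iff₀ (by positivity) hppos]
      nlinarith [mul_le_mul_of_nonneg_left key hεpos.le]
    linarith
  · -- large ε
    have hhalf : Real.sqrt (1 - 2⁻¹ : ℝ) = (Real.sqrt 2)⁻¹ := by
      rw [show (1:ℝ) - 2⁻¹ = 2⁻¹ by norm_num, Real.sqrt_inv]
    have hc2 : (0:ℝ) ≤ 2 / (Real.pi * Real.sqrt 3) := by positivity
    have hmidR : ∫⁻ t in Set.Ioc (1 - ε) (2⁻¹ : ℝ), f t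
        ≤ ENNReal.ofReal (2 / (Real.pi * Real.sqrt 3) * (ε - 2⁻¹)) := by
      calc ∫⁻ t in Set.Ioc (1 - ε) (2⁻¹ : ℝ), f t
          ≤ ∫⁻ _t in Set.Ioc (1 - ε) (2⁻¹ : ℝ), ENNReal.ofReal (2 / (Real.pi * Real.sqrt 3)) := by
            refine setLIntegral_mono' measurableSet_Ioc (fun u hu => ENNReal.ofReal_le_ofReal ?_)
            refine densMid ?_
            rcases hu with ⟨hu1, hu2⟩
            nlinarith
        _ = ENNReal.ofReal (2 / (Real.pi * Real.sqrt 3)) * volume (Set.Ioc (1 - ε) (2⁻¹ : ℝ)) :=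
            setLIntegral_const _ _
        _ = ENNReal.ofReal (2 / (Real.pi * Real.sqrt 3) * (ε - 2⁻¹)) := by
            rw [Real.volume_Ioc, ← ENNReal.ofReal_mul hc2]
            congr 1
            ring
    have hmidL : ∫⁻ t in Set.Ioc (-2⁻¹ : ℝ) (-1 + ε), f t
        ≤ ENNReal.ofReal (2 / (Real.pi * Real.sqrt 3) * (ε - 2⁻¹)) := by
      calc ∫⁻ t in Set.Ioc (-2⁻¹ : ℝ) (-1 + ε), f t
          ≤ ∫⁻ _t in Set.Ioc (-2⁻¹ : ℝ) (-1 + ε), ENNReal.ofReal (2 / (Real.pi * Real.sqrt 3)) := by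
            refine setLIntegral_mono' measurableSet_Ioc (fun u hu => ENNReal.ofReal_le_ofReal ?_)
            refine densMid ?_
            rcases hu with ⟨hu1, hu2⟩
            nlinarith
        _ = ENNReal.ofReal (2 / (Real.pi * Real.sqrt 3)) * volume (Set.Ioc (-2⁻¹ : ℝ) (-1 + ε)) :=
            setLIntegral_const _ _
        _ = ENNReal.ofReal (2 / (Real.pi * Real.sqrt 3) * (ε - 2⁻¹)) := by
            rw [Real.volume_Ioc, ← ENNReal.ofReal_mul hc2]
            congr 1
            ring
    have hedgeR : ∫⁻ t in Set.Ioc (2⁻¹ : ℝ) 1, f t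
        ≤ ENNReal.ofReal ((Real.sqrt 2 / (Real.pi * Real.sqrt 3)) * (2 * Real.sqrt (1 - 2⁻¹))) := by
      apply edgeR _ _ (by norm_num) hc
      intro u hu
      exact densR (by rcases hu with ⟨hu1, hu2⟩; linarith) hu.2
    have hedgeL : ∫⁻ t in Set.Ioc (-1 : ℝ) (-2⁻¹), f t
        ≤ ENNReal.ofReal ((Real.sqrt 2 / (Real.pi * Real.sqrt 3)) * (2 * Real.sqrt ((-2⁻¹ : ℝ) + 1))) := by
      apply edgeL _ _ (by norm_num) hc
      intro u hu
      exact densL (by rcases hu with ⟨hu1, hu2⟩; linarith) hu.1.le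
    have hsplitR : Set.Ioc (1 - ε) (1:ℝ) = Set.Ioc (1 - ε) (2⁻¹ : ℝ) ∪ Set.Ioc (2⁻¹ : ℝ) 1 :=
      (Set.Ioc_union_Ioc_eq_Ioc (by linarith) (by norm_num)).symm
    have hsplitL : Set.Ioc (-1 : ℝ) (-1 + ε) = Set.Ioc (-1 : ℝ) (-2⁻¹) ∪ Set.Ioc (-2⁻¹ : ℝ) (-1 + ε) :=
      (Set.Ioc_union_Ioc_eq_Ioc (by norm_num) (by linarith)).symm
    have hR : ∫⁻ t in Set.Ioc (1 - ε) 1, f t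
        ≤ ENNReal.ofReal (2 / (Real.pi * Real.sqrt 3) * (ε - 2⁻¹))
          + ENNReal.ofReal ((Real.sqrt 2 / (Real.pi * Real.sqrt 3)) * (2 * Real.sqrt (1 - 2⁻¹))) := by
      rw [hsplitR]
      exact (lintegral_union_le _ _ _).trans (add_le_add hmidR hedgeR)
    have hL : ∫⁻ t in Set.Ioc (-1 : ℝ) (-1 + ε), f t
        ≤ ENNReal.ofReal ((Real.sqrt 2 / (Real.pi * Real.sqrt 3)) * (2 * Real.sqrt ((-2⁻¹ : ℝ) + 1)))
          + ENNReal.ofReal (2 / (Real.pi * Real.sqrt 3) * (ε - 2⁻¹)) := by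
      rw [hsplitL]
      exact (lintegral_union_le _ _ _).trans (add_le_add hedgeL hmidL)
    refine hmain.trans ((add_le_add hL hR).trans ?_)
    rw [show ((-2⁻¹ : ℝ) + 1) = 1 - 2⁻¹ by ring]
    have n1 : (0:ℝ) ≤ Real.sqrt 2 / (Real.pi * Real.sqrt 3) * (2 * Real.sqrt (1 - 2⁻¹)) := by
      positivity
    have n2 : (0:ℝ) ≤ 2 / (Real.pi * Real.sqrt 3) * (ε - 2⁻¹) := mul_nonneg hc2 (by linarith)
    rw [← ENNReal.ofReal_add n1 n2, ← ENNReal.ofReal_add n2 n1,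
      ← ENNReal.ofReal_add (add_nonneg n1 n2) (add_nonneg n2 n1)]
    apply ENNReal.ofReal_le_ofReal
    rw [hsqrtdiv, hhalf]
    have hE : Real.sqrt 2 / (Real.pi * Real.sqrt 3) * (2 * (Real.sqrt 2)⁻¹)
        = 2 / (Real.pi * Real.sqrt 3) := by
      rw [div_mul_eq_mul_div]
      congr 1
      rw [mul_comm (2:ℝ), ← mul_assoc, mul_inv_cancel₀ (ne_of_gt h2pos), one_mul]
    rw [hE]
    have key2 : (2 * ε + 1) * Real.sqrt Real.pi ≤ Real.sqrt ε * (Real.pi * Real.sqrt 3) := by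
      apply sqle (by positivity) (by positivity)
      have hq : (0:ℝ) ≤ (ε - 2⁻¹) * (1 - ε) := mul_nonneg (by linarith) (by linarith)
      have e1 : ((2 * ε + 1) * Real.sqrt Real.pi) ^ 2 = (2 * ε + 1) ^ 2 * Real.sqrt Real.pi ^ 2 := by
        ring
      have e2 : (Real.sqrt ε * (Real.pi * Real.sqrt 3)) ^ 2
          = Real.sqrt ε ^ 2 * (Real.pi ^ 2 * Real.sqrt 3 ^ 2) := by ring
      rw [e1, e2, hp2, hεs, h32]
      have h3πε : (2 * ε + 1) ^ 2 ≤ 3 * Real.pi * ε := by nlinarith [hq, hπ, h1, h0]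
      linarith [mul_le_mul_of_nonneg_right h3πε Real.pi_pos.le]
    have hfin : (2 * ε + 1) / (Real.pi * Real.sqrt 3) ≤ Real.sqrt ε / Real.sqrt Real.pi := by
      rw [div_le_div_iff₀ (by positivity) hppos]
      linarith
    have heq : 2 / (Real.pi * Real.sqrt 3) + 2 / (Real.pi * Real.sqrt 3) * (ε - 2⁻¹)
        + (2 / (Real.pi * Real.sqrt 3) * (ε - 2⁻¹) + 2 / (Real.pi * Real.sqrt 3))
        = (2 * ε + 1) / (Real.pi * Real.sqrt 3) * 2 := by
      ring
    rw [heq]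
    linarith only [hfin]

lemma chebSupp : chebMeasure ((Set.Icc (-1:ℝ) 1)ᶜ) = 0 := by
  rw [chebMeasure, withDensity_apply _ measurableSet_Icc.compl,
    Measure.restrict_restrict measurableSet_Icc.compl, Set.compl_inter_self]
  simp



/-- Distortion bound based on the Christoffel function: for a bounded orthonormal
system `φ₁, …, φ_N` (constant `K`) w.r.t. the Chebyshev measure, if the normalized
Christoffel function `C_N(t) = (1/N) Σ_j |φ_j(t)|²` satisfies `|C_N − 1| ≤ τ` on
`[−1+ε, 1−ε]`, then the distortion `ξ = E[max_i |(m/N)‖a_i‖₂² − 1|]` of the random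
sampling matrix `A_{ij} = m^{−1/2} φ_j(t_i)` satisfies `ξ ≤ τ + 2(K²+1) m √(ε/π)`. -/
theorem stmt17 {Ω : Type*} [MeasurableSpace Ω] (μ : Measure Ω) [IsProbabilityMeasure μ]
    {N m : ℕ} (hN : 1 ≤ N) (K : ℝ) (hK : 1 ≤ K)
    (φ : Fin N → ℝ → ℂ) (hφm : ∀ j, Measurable (φ j))
    (hbdd : ∀ j, ∀ u ∈ Set.Icc (-1 : ℝ) 1, ‖φ j u‖ ≤ K)
    (hortho : ∀ j k, ∫ u, φ j u * (starRingEnd ℂ) (φ k u) ∂chebMeasure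
        = if j = k then 1 else 0)
    (t : Fin m → Ω → ℝ) (htm : ∀ i, Measurable (t i))
    (hlaw : ∀ i, μ.map (t i) = chebMeasure)
    (hindep : ProbabilityTheory.iIndepFun t μ)
    (ε τ : ℝ) (hε0 : 0 < ε) (hε1 : ε < 1) (hτ : 0 < τ)
    (hChristoffel : ∀ u ∈ Set.Icc (-1 + ε) (1 - ε),
      |(1 / (N : ℝ)) * ∑ j, ‖φ j u‖ ^ 2 - 1| ≤ τ) :
    ∫ ω, (⨆ i : Fin m, |(1 / (N : ℝ)) * ∑ j, ‖φ j (t i ω)‖ ^ 2 - 1|) ∂μ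
      ≤ τ + 2 * (K ^ 2 + 1) * m * Real.sqrt (ε / Real.pi) := by
  have hsq : (0:ℝ) ≤ Real.sqrt (ε / Real.pi) := Real.sqrt_nonneg _
  set B : Set ℝ := (Set.Icc (-1 + ε) (1 - ε))ᶜ with hB
  have hBm : MeasurableSet B := measurableSet_Icc.compl
  have hNpos : (0:ℝ) < (N:ℝ) := by exact_mod_cast hN
  have hCb : ∀ u ∈ Set.Icc (-1:ℝ) 1, |(1 / (N : ℝ)) * ∑ j, ‖φ j u‖ ^ 2 - 1| ≤ K ^ 2 + 1 := by
    intro u hu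
    have h0 : (0:ℝ) ≤ (1 / (N : ℝ)) * ∑ j, ‖φ j u‖ ^ 2 := by positivity
    have h1 : (1 / (N : ℝ)) * ∑ j, ‖φ j u‖ ^ 2 ≤ K ^ 2 := by
      have hsum : ∑ j, ‖φ j u‖ ^ 2 ≤ (N:ℝ) * K ^ 2 := by
        calc ∑ j, ‖φ j u‖ ^ 2 ≤ ∑ _j : Fin N, K ^ 2 :=
            Finset.sum_le_sum (fun j _ => by
              have := hbdd j u hu
              nlinarith [norm_nonneg (φ j u)])
          _ = (N:ℝ) * K ^ 2 := by simp [Finset.sum_const, mul_comm]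
      calc (1 / (N : ℝ)) * ∑ j, ‖φ j u‖ ^ 2 ≤ (1 / (N : ℝ)) * ((N:ℝ) * K ^ 2) := by
            apply mul_le_mul_of_nonneg_left hsum (by positivity)
        _ = K ^ 2 := by field_simp
    rw [abs_le]
    constructor <;> nlinarith
  have hpre : ∀ i : Fin m, μ (t i ⁻¹' B) = chebMeasure B := by
    intro i
    rw [← Measure.map_apply (htm i) hBm, hlaw i]
  have hind_eq : ∀ i : Fin m, (fun ω => Set.indicator B (fun _ => (1:ℝ)) (t i ω))
      = Set.indicator (t i ⁻¹' B) (fun _ => (1:ℝ)) := by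
    intro i
    funext ω
    by_cases h : t i ω ∈ B <;>
      simp [Set.indicator_apply, Set.mem_preimage, h]
  have hind_int : ∀ i : Fin m,
      Integrable (fun ω => Set.indicator B (fun _ => (1:ℝ)) (t i ω)) μ := by
    intro i
    rw [hind_eq i]
    exact (integrable_indicator_iff ((htm i) hBm)).2
      (integrableOn_const (measure_lt_top μ _).ne)
  have hind_val : ∀ i : Fin m,
      ∫ ω, Set.indicator B (fun _ => (1:ℝ)) (t i ω) ∂μ = (chebMeasure B).toReal := by
    intro i
    rw [hind_eq i, ← hpre i]
    exact integral_indicator_one ((htm i) hBm)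
  set S : Ω → ℝ := fun ω => ∑ i, Set.indicator B (fun _ => (1:ℝ)) (t i ω) with hS
  have hS_int : Integrable S μ := integrable_finset_sum _ (fun i _ => hind_int i)
  have hg_int : Integrable (fun ω => τ + (K ^ 2 + 1) * S ω) μ :=
    (integrable_const τ).add (hS_int.const_mul _)
  have hae : ∀ᵐ ω ∂μ, ∀ i, t i ω ∈ Set.Icc (-1:ℝ) 1 := by
    rw [MeasureTheory.ae_all_iff]
    intro i
    have h0 : μ (t i ⁻¹' (Set.Icc (-1:ℝ) 1)ᶜ) = 0 := by
      rw [← Measure.map_apply (htm i) measurableSet_Icc.compl, hlaw i]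
      exact chebSupp
    rw [ae_iff]
    convert h0 using 2
    rfl
  have hmono : ∀ᵐ ω ∂μ, (⨆ i : Fin m, |(1 / (N : ℝ)) * ∑ j, ‖φ j (t i ω)‖ ^ 2 - 1|)
      ≤ τ + (K ^ 2 + 1) * S ω := by
    filter_upwards [hae] with ω hω
    have hSnn : 0 ≤ S ω :=
      Finset.sum_nonneg (fun i _ => Set.indicator_nonneg (fun _ _ => zero_le_one) _)
    rcases isEmpty_or_nonempty (Fin m) with hm | hm
    · rw [iSup_of_empty', Real.sSup_empty]
      nlinarith
    · apply ciSup_le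
      intro i
      by_cases hi : t i ω ∈ Set.Icc (-1 + ε) (1 - ε)
      · have := hChristoffel _ hi
        nlinarith
      · have h1 : Set.indicator B (fun _ => (1:ℝ)) (t i ω) = 1 :=
          Set.indicator_of_mem (show t i ω ∈ B from hi) (fun _ => (1:ℝ))
        have hge : (1:ℝ) ≤ S ω := by
          rw [← h1, hS]
          exact Finset.single_le_sum
            (f := fun j => Set.indicator B (fun _ => (1:ℝ)) (t j ω))
            (fun j _ => Set.indicator_nonneg (fun _ _ => zero_le_one) _) (Finset.mem_univ i)
        have habs := hCb _ (hω i)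
        nlinarith
  have hnn : ∀ᵐ ω ∂μ, 0 ≤ ⨆ i : Fin m, |(1 / (N : ℝ)) * ∑ j, ‖φ j (t i ω)‖ ^ 2 - 1| :=
    Filter.Eventually.of_forall (fun ω => Real.iSup_nonneg (fun i => abs_nonneg _))
  refine (integral_mono_of_nonneg hnn hg_int hmono).trans ?_
  have hval : ∫ ω, (τ + (K ^ 2 + 1) * S ω) ∂μ
      = τ + (K ^ 2 + 1) * ((m : ℝ) * (chebMeasure B).toReal) := by
    rw [integral_add (integrable_const τ) (hS_int.const_mul _),
      MeasureTheory.integral_const, MeasureTheory.integral_const_mul]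
    have : ∫ ω, S ω ∂μ = (m : ℝ) * (chebMeasure B).toReal := by
      rw [hS, integral_finset_sum _ (fun i _ => hind_int i)]
      simp [hind_val]
    rw [this]
    simp
  rw [hval]
  have htoReal : (chebMeasure B).toReal ≤ 2 * Real.sqrt (ε / Real.pi) :=
    ENNReal.toReal_le_of_le_ofReal (by positivity) (chebBad ε hε0 hε1)
  have hK1 : (0:ℝ) ≤ K ^ 2 + 1 := by positivity
  have hm0 : (0:ℝ) ≤ (m:ℝ) := Nat.cast_nonneg m
  nlinarith [mul_le_mul_of_nonneg_left htoReal hm0,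
    mul_le_mul_of_nonneg_left (mul_le_mul_of_nonneg_left htoReal hm0) hK1]
end
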